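/- Let f : ℝⁿ → ℝⁿ be continuous, with each component f_i nonnegative, monotonically increasing (x ≤ y entrywise implies f(x) ≤ f(y)), and concave on [0,1]ⁿ with f_i(θx) ≤ θ f_i(x) for θ ≥ 1 whenever x, θx ∈ [0,1]ⁿ. Let γ_i > 0 and define T_i(x) = f_i(x)/(γ_i + f_i(x)). If x* and x** are two fixed points of T in (0,1]ⁿ with f_i(x*) > 0 strictly increasing in the sense that f_{i}(θ x) < θ f_i(x) implies strictness at the maximizing index, then x* = x**; i.e., T has at most one fixed point in (0,1]ⁿ under the stated concavity/monotonicity conditions. -/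
import Mathlib

theorem stmt8_aux {n : ℕ} (f : Fin n → (Fin n → ℝ) → ℝ) (γ : Fin n → ℝ)
    (hγ : ∀ i, 0 < γ i)
    (hnn : ∀ i (x : Fin n → ℝ), 0 ≤ x → 0 ≤ f i x)
    (hmono : ∀ i (x y : Fin n → ℝ), 0 ≤ x → x ≤ y → f i x ≤ f i y)
    (hsub : ∀ i (θ : ℝ) (x : Fin n → ℝ), 1 ≤ θ → 0 ≤ x → f i (θ • x) ≤ θ * f i x)
    (xs xss : Fin n → ℝ)
    (hxs : ∀ i, 0 < xs i ∧ xs i ≤ 1) (hxss : ∀ i, 0 < xss i ∧ xss i ≤ 1)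
    (hfix : ∀ i, xs i = f i xs / (γ i + f i xs))
    (hfix' : ∀ i, xss i = f i xss / (γ i + f i xss)) :
    ∀ j, xs j ≤ xss j := by
  by_contra h
  push_neg at h
  obtain ⟨j0, hj0⟩ := h
  obtain ⟨i, -, hi⟩ := Finset.exists_max_image Finset.univ (fun j => xs j / xss j)
    ⟨j0, Finset.mem_univ j0⟩
  set θ := xs i / xss i with hθdef
  have hθ1 : 1 < θ := by
    refine lt_of_lt_of_le ?_ (hi j0 (Finset.mem_univ j0))
    rw [lt_div_iff₀ (hxss j0).1]
    linarith
  have hxsnn : (0 : Fin n → ℝ) ≤ xs := fun j => (hxs j).1.le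
  have hxssnn : (0 : Fin n → ℝ) ≤ xss := fun j => (hxss j).1.le
  have hle : ∀ j, xs j ≤ θ * xss j := fun j => by
    have h1 := hi j (Finset.mem_univ j)
    exact (div_le_iff₀ (hxss j).1).mp h1
  have hF : 0 < f i xss := by
    rcases lt_or_eq_of_le (hnn i xss hxssnn) with h | h
    · exact h
    · exfalso
      have h2 := hfix' i
      rw [← h, zero_div] at h2
      linarith [(hxss i).1]
  have h1 : f i xs ≤ θ * f i xss := by
    refine le_trans (hmono i xs (θ • xss) hxsnn ?_) (hsub i θ xss hθ1.le hxssnn)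
    intro j
    simpa using hle j
  set a := f i xs with ha
  set F := f i xss with hFdef
  have hanneg : 0 ≤ a := hnn i xs hxsnn
  have hγi := hγ i
  have step1 : xs i ≤ θ * F / (γ i + θ * F) := by
    rw [hfix i, div_le_div_iff₀ (by linarith) (by nlinarith)]
    nlinarith
  have step2 : θ * F / (γ i + θ * F) < θ * F / (γ i + F) := by
    apply div_lt_div_of_pos_left (by nlinarith) (by linarith)
    nlinarith
  have step3 : θ * F / (γ i + F) = θ * xss i := by
    rw [hfix' i, ← hFdef, mul_div_assoc]
  have step4 : θ * xss i = xs i := by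
    rw [hθdef, div_mul_cancel₀]
    exact (hxss i).1.ne'
  linarith [step1, step2]

/-- Uniqueness of fixed points of `T_i(x) = f_i(x)/(γ_i + f_i(x))` in `(0,1]ⁿ`, for
nonnegative, monotone, strictly increasing and concave (subhomogeneous) rates `f_i`. -/
theorem stmt8 {n : ℕ} (f : Fin n → (Fin n → ℝ) → ℝ) (γ : Fin n → ℝ)
    (hγ : ∀ i, 0 < γ i)
    (hnn : ∀ i (x : Fin n → ℝ), 0 ≤ x → 0 ≤ f i x)
    (hmono : ∀ i (x y : Fin n → ℝ), 0 ≤ x → x ≤ y → f i x ≤ f i y)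
    (hstrict : ∀ i (x y : Fin n → ℝ), 0 ≤ x → (∀ j, x j < y j) → f i x < f i y)
    (hsub : ∀ i (θ : ℝ) (x : Fin n → ℝ), 1 ≤ θ → 0 ≤ x → f i (θ • x) ≤ θ * f i x)
    (xs xss : Fin n → ℝ)
    (hxs : ∀ i, 0 < xs i ∧ xs i ≤ 1) (hxss : ∀ i, 0 < xss i ∧ xss i ≤ 1)
    (hfix : ∀ i, xs i = f i xs / (γ i + f i xs))
    (hfix' : ∀ i, xss i = f i xss / (γ i + f i xss)) :
    xs = xss := by
  have h1 := stmt8_aux f γ hγ hnn hmono hsub xs xss hxs hxss hfix hfix'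
  have h2 := stmt8_aux f γ hγ hnn hmono hsub xss xs hxss hxs hfix' hfix
  funext j
  exact le_antisymm (h1 j) (h2 j)
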